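/- Let X be a modular element of L_2(n,m;q) (i.e., dim(X ∧ Y) + dim(X ∨ Y) = dim X + dim Y for all Y in the lattice). If X contains a vector of rank 3, then X = (F_{q^m})^n. -/

import Mathlib

open Submodule

/-- The rank of a vector `v ∈ L^n`: the `Fq`-dimension of the `Fq`-span of its entries. -/
noncomputable def rkVec (Fq : Type*) {L : Type*} [Field Fq] [Field L] [Algebra Fq L]
    {n : ℕ} (v : Fin n → L) : ℕ :=
  Module.finrank Fq ↥(Submodule.span Fq (Set.range v))

/-- The rank-metric lattice `L_i(n,m;q)`: subspaces of `L^n` spanned by their vectors of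
rank at most `i`. -/
def RML (Fq L : Type*) [Field Fq] [Field L] [Algebra Fq L] (n i : ℕ) :
    Set (Submodule L (Fin n → L)) :=
  {X | X = Submodule.span L {x | x ∈ X ∧ rkVec Fq x ≤ i}}

/-- The meet in the rank-metric lattice: span of the rank-`≤ i` vectors of the intersection. -/
def rmlMeet (Fq : Type*) {L : Type*} [Field Fq] [Field L] [Algebra Fq L] {n : ℕ} (i : ℕ)
    (X Y : Submodule L (Fin n → L)) : Submodule L (Fin n → L) :=
  Submodule.span L {x | x ∈ X ⊓ Y ∧ rkVec Fq x ≤ i}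

/-- `X` is a modular element of the rank-metric lattice `L_i`. -/
def IsModularElt (Fq : Type*) {L : Type*} [Field Fq] [Field L] [Algebra Fq L] {n : ℕ} (i : ℕ)
    (X : Submodule L (Fin n → L)) : Prop :=
  ∀ Y ∈ RML Fq L n i,
    Module.finrank L ↥(rmlMeet Fq i X Y) + Module.finrank L ↥(X ⊔ Y)
      = Module.finrank L ↥X + Module.finrank L ↥Y

section Aux

variable {Fq L : Type} [Field Fq] [Field L] [Algebra Fq L] {n : ℕ}

/-- Multiplication by a nonzero scalar as an `Fq`-linear equivalence of `L`. -/
noncomputable def mulEquiv (s : L) (hs : s ≠ 0) : L ≃ₗ[Fq] L where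
  toFun t := s * t
  map_add' := mul_add s
  map_smul' c t := by simp [Algebra.mul_smul_comm]
  invFun t := s⁻¹ * t
  left_inv t := by field_simp
  right_inv t := by field_simp

lemma rkVec_smul (s : L) (hs : s ≠ 0) (v : Fin n → L) :
    rkVec Fq (s • v) = rkVec Fq v := by
  have hrange : Set.range (s • v) = (mulEquiv (Fq := Fq) s hs) '' Set.range v := by
    ext t
    constructor
    · rintro ⟨j, rfl⟩; exact ⟨v j, ⟨j, rfl⟩, rfl⟩
    · rintro ⟨u, ⟨j, rfl⟩, rfl⟩; exact ⟨j, rfl⟩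
  unfold rkVec
  rw [hrange, ← LinearEquiv.coe_coe, Submodule.span_image]
  exact LinearEquiv.finrank_map_eq _ _

lemma rkVec_le_two (a b : L) (v : Fin n → L)
    (h : ∀ j, v j ∈ Submodule.span Fq ({a, b} : Set L)) : rkVec Fq v ≤ 2 := by
  classical
  haveI : FiniteDimensional Fq (Submodule.span Fq ((({a, b} : Finset L)) : Set L)) :=
    FiniteDimensional.span_of_finite Fq (Set.toFinite _)
  have hle : Submodule.span Fq (Set.range v)
      ≤ Submodule.span Fq ((({a, b} : Finset L)) : Set L) := by
    rw [Submodule.span_le]; rintro _ ⟨j, rfl⟩; simpa using h j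
  refine le_trans (Submodule.finrank_mono hle) ?_
  refine le_trans (finrank_span_finset_le_card ({a, b} : Finset L)) ?_
  exact (Finset.card_insert_le a {b}).trans (by simp)

lemma rkVec_ne_zero (v : Fin n → L) (hv : rkVec Fq v = 3) : v ≠ 0 := by
  intro h
  subst h
  have hsub : Set.range (0 : Fin n → L) ⊆ {0} := by rintro _ ⟨j, rfl⟩; rfl
  have : Submodule.span Fq (Set.range (0 : Fin n → L)) ≤ ⊥ := by
    rw [← Submodule.span_zero_singleton Fq]
    exact Submodule.span_mono hsub
  have hb : Submodule.span Fq (Set.range (0 : Fin n → L)) = ⊥ := le_bot_iff.1 this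
  rw [rkVec, hb, finrank_bot] at hv
  exact absurd hv (by norm_num)

/-- Key step: if a modular element `X` of `L_2` contains a rank-3 vector `x = g₁ + g₂`
with `rk gᵢ ≤ 2`, then `g₂ ∈ X`. -/
lemma key_step (X : Submodule L (Fin n → L)) (hmod : IsModularElt Fq 2 X)
    {x g1 g2 : Fin n → L} (hx : x ∈ X) (hxr : rkVec Fq x = 3)
    (hsum : g1 + g2 = x) (h1 : rkVec Fq g1 ≤ 2) (h2 : rkVec Fq g2 ≤ 2) :
    g2 ∈ X := by
  by_contra hg2
  set Y : Submodule L (Fin n → L) := Submodule.span L {g1, g2} with hYdef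
  have hg1Y : g1 ∈ Y := Submodule.subset_span (by simp)
  have hg2Y : g2 ∈ Y := Submodule.subset_span (by simp)
  have hxY : x ∈ Y := hsum ▸ add_mem hg1Y hg2Y
  have hYRML : Y ∈ RML Fq L n 2 := by
    show Y = Submodule.span L {y | y ∈ Y ∧ rkVec Fq y ≤ 2}
    refine le_antisymm ?_ ?_
    · rw [hYdef, Submodule.span_le]
      rintro y hy
      rcases hy with rfl | hy
      · exact Submodule.subset_span ⟨hg1Y, h1⟩
      · rcases hy with rfl
        exact Submodule.subset_span ⟨hg2Y, h2⟩
    · rw [Submodule.span_le]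
      rintro y ⟨hy, -⟩
      exact hy
  have hmeet : rmlMeet Fq 2 X Y = ⊥ := by
    rw [rmlMeet, eq_bot_iff, Submodule.span_le]
    rintro y ⟨hyXY, hyr⟩
    obtain ⟨hyX, hyY⟩ := Submodule.mem_inf.1 hyXY
    obtain ⟨a, b, hab⟩ := Submodule.mem_span_pair.1 hyY
    have hba : b = a := by
      by_contra hba
      have hmem : (b - a) • g2 ∈ X := by
        have : (b - a) • g2 = y - a • x := by
          rw [← hab, ← hsum]; module
        rw [this]
        exact sub_mem hyX (X.smul_mem a hx)
      have : g2 ∈ X := by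
        have := X.smul_mem (b - a)⁻¹ hmem
        rwa [smul_smul, inv_mul_cancel₀ (sub_ne_zero.2 hba), one_smul] at this
      exact hg2 this
    have hya : y = a • x := by rw [← hab, hba, ← hsum]; module
    have ha : a = 0 := by
      by_contra ha
      rw [hya, rkVec_smul a ha x, hxr] at hyr
      omega
    simp [hya, ha]
  have hxne : x ≠ 0 := rkVec_ne_zero x hxr
  have hEq := hmod Y hYRML
  rw [hmeet, finrank_bot, zero_add] at hEq
  -- bound the join
  have hYle : Y ≤ X ⊔ Submodule.span L {g2} := by
    rw [hYdef, Submodule.span_le]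
    rintro y hy
    rcases hy with rfl | hy
    · have : y = x - g2 := by rw [← hsum]; abel
      rw [this]
      exact sub_mem (Submodule.mem_sup_left hx)
        (Submodule.mem_sup_right (Submodule.subset_span rfl))
    · rcases hy with rfl
      exact Submodule.mem_sup_right (Submodule.subset_span rfl)
  have hjoin : Module.finrank L ↥(X ⊔ Y) ≤ Module.finrank L ↥X + 1 := by
    have h1' : Module.finrank L ↥(X ⊔ Y)
        ≤ Module.finrank L ↥(X ⊔ Submodule.span L {g2}) :=
      Submodule.finrank_mono (sup_le le_sup_left hYle)
    have h2' := Submodule.finrank_sup_add_finrank_inf_eq X (Submodule.span L {g2})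
    have h3' : Module.finrank L ↥(Submodule.span L ({g2} : Set (Fin n → L))) ≤ 1 := by
      refine le_trans (finrank_span_le_card ({g2} : Set (Fin n → L))) ?_
      simp
    omega
  have hY1 : Module.finrank L ↥Y ≤ 1 := by omega
  have hxspan : Submodule.span L {x} ≤ Y := by
    rw [Submodule.span_le]; rintro y rfl; exact hxY
  have hfx : Module.finrank L ↥(Submodule.span L ({x} : Set (Fin n → L))) = 1 :=
    finrank_span_singleton hxne
  have hYeq : Submodule.span L {x} = Y :=
    Submodule.eq_of_le_of_finrank_le hxspan (by omega)
  have : g2 ∈ Submodule.span L ({x} : Set (Fin n → L)) := hYeq ▸ hg2Y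
  obtain ⟨a, rfl⟩ := Submodule.mem_span_singleton.1 this
  by_cases ha : a = 0
  · exact hg2 (by simp [ha])
  · rw [rkVec_smul a ha x, hxr] at h2
    omega


/-- A rank-3 vector decomposes as `x j = d₀ c₀ⱼ + d₁ c₁ⱼ + d₂ c₂ⱼ` with `cₖⱼ ∈ Fq`. -/
lemma exists_decomp (x : Fin n → L) (hxr : rkVec Fq x = 3) :
    ∃ (d0 d1 d2 : L) (c0 c1 c2 : Fin n → Fq), d0 ≠ 0 ∧
      ∀ j, x j = d0 * algebraMap Fq L (c0 j) + d1 * algebraMap Fq L (c1 j)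
        + d2 * algebraMap Fq L (c2 j) := by
  classical
  set V := Submodule.span Fq (Set.range x) with hVdef
  haveI : FiniteDimensional Fq V := FiniteDimensional.span_of_finite Fq (Set.finite_range x)
  have hV3 : Module.finrank Fq V = 3 := hxr
  let b : Module.Basis (Fin 3) Fq V := Module.finBasisOfFinrankEq Fq V hV3
  have hmemV : ∀ j, x j ∈ V := fun j => Submodule.subset_span ⟨j, rfl⟩
  refine ⟨((b 0 : V) : L), ((b 1 : V) : L), ((b 2 : V) : L),
    fun j => b.repr ⟨x j, hmemV j⟩ 0, fun j => b.repr ⟨x j, hmemV j⟩ 1,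
    fun j => b.repr ⟨x j, hmemV j⟩ 2, ?_, ?_⟩
  · simpa [ZeroMemClass.coe_eq_zero] using b.ne_zero 0
  · intro j
    have h2 : (b.repr ⟨x j, hmemV j⟩ 0) • ((b 0 : V) : L)
        + (b.repr ⟨x j, hmemV j⟩ 1) • ((b 1 : V) : L)
        + (b.repr ⟨x j, hmemV j⟩ 2) • ((b 2 : V) : L) = x j := by
      have h := b.sum_repr ⟨x j, hmemV j⟩
      have h' := congrArg (Subtype.val) h
      simpa only [Fin.sum_univ_three, Submodule.coe_add, Submodule.coe_smul] using h'
    rw [← h2]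
    simp only [Algebra.smul_def]
    ring

end Aux

theorem modular_with_rank_three_eq_top (q m n : ℕ) (hq : IsPrimePow q) (hn : 3 ≤ n)
    (hm : 3 ≤ m) (Fq L : Type) [Field Fq] [Field L] [Algebra Fq L] [Fintype Fq]
    (hcard : Fintype.card Fq = q) (hdim : Module.finrank Fq L = m)
    (X : Submodule L (Fin n → L)) (hXmem : X ∈ RML Fq L n 2)
    (hmod : IsModularElt Fq 2 X)
    (x : Fin n → L) (hx : x ∈ X) (hxr : rkVec Fq x = 3) :
    X = ⊤ := by
  classical
  obtain ⟨d0, d1, d2, c0, c1, c2, hd0, hxj⟩ := exists_decomp (Fq := Fq) x hxr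
  set β : L := d0⁻¹ * d1 with hβdef
  set γ : L := d0⁻¹ * d2 with hγdef
  set A : Fin n → L := fun j => algebraMap Fq L (c0 j) with hAdef
  set B : Fin n → L := fun j => algebraMap Fq L (c1 j) with hBdef
  set C : Fin n → L := fun j => algebraMap Fq L (c2 j) with hCdef
  set x' : Fin n → L := d0⁻¹ • x with hx'def
  have hx'X : x' ∈ X := X.smul_mem _ hx
  have hx'r : rkVec Fq x' = 3 := by
    rw [hx'def, rkVec_smul _ (inv_ne_zero hd0), hxr]
  have hx'sum : (A + β • B + γ • C) = x' := by
    funext j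
    have := hxj j
    simp only [Pi.add_apply, Pi.smul_apply, smul_eq_mul, hx'def, hAdef, hBdef, hCdef,
      hβdef, hγdef, this]
    field_simp
  -- step 1: `γ • C ∈ X`
  have h1fst : rkVec Fq (A + β • B) ≤ 2 := by
    refine rkVec_le_two 1 β _ fun j => ?_
    have hval : (A + β • B) j = (c0 j) • (1 : L) + (c1 j) • β := by
      simp only [Pi.add_apply, Pi.smul_apply, smul_eq_mul, hAdef, hBdef]
      simp only [Algebra.smul_def]
      ring
    rw [hval]
    exact add_mem
      (Submodule.smul_mem _ _ (Submodule.subset_span (Set.mem_insert _ _)))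
      (Submodule.smul_mem _ _ (Submodule.subset_span (Set.mem_insert_of_mem _ rfl)))
  have h2fst : rkVec Fq (γ • C) ≤ 2 := by
    refine rkVec_le_two γ 1 _ fun j => ?_
    have hval : (γ • C) j = (c2 j) • γ := by
      simp only [Pi.smul_apply, smul_eq_mul, hCdef]
      simp only [Algebra.smul_def]
      ring
    rw [hval]
    exact Submodule.smul_mem _ _ (Submodule.subset_span (Set.mem_insert _ _))
  have hγC : γ • C ∈ X := key_step X hmod hx'X hx'r hx'sum h1fst h2fst
  -- step 2: every standard basis vector is in `X`
  have hPX : ∀ i : Fin n, Pi.single i (1 : L) ∈ X := by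
    intro i
    set P : Fin n → L := Pi.single i (1 : L) with hPdef
    have hsum2 : (A + β • B + P) + (γ • C - P) = x' := by
      rw [← hx'sum]; abel
    have h1' : rkVec Fq (A + β • B + P) ≤ 2 := by
      refine rkVec_le_two 1 β _ fun j => ?_
      have hPj : P j ∈ Submodule.span Fq ({1, β} : Set L) := by
        rcases eq_or_ne j i with rfl | hne
        · rw [hPdef, Pi.single_eq_same]
          exact Submodule.subset_span (Set.mem_insert (1 : L) {β})
        · rw [hPdef, Pi.single_eq_of_ne hne]
          exact Submodule.zero_mem _
      have hval : (A + β • B + P) j = ((c0 j) • (1 : L) + (c1 j) • β) + P j := by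
        simp only [Pi.add_apply, Pi.smul_apply, smul_eq_mul, hAdef, hBdef]
        simp only [Algebra.smul_def]
        ring
      rw [hval]
      refine add_mem (add_mem ?_ ?_) hPj
      · exact Submodule.smul_mem _ _ (Submodule.subset_span (Set.mem_insert _ _))
      · exact Submodule.smul_mem _ _ (Submodule.subset_span (Set.mem_insert_of_mem _ rfl))
    have h2' : rkVec Fq (γ • C - P) ≤ 2 := by
      refine rkVec_le_two γ 1 _ fun j => ?_
      have hPj : P j ∈ Submodule.span Fq ({γ, 1} : Set L) := by
        rcases eq_or_ne j i with rfl | hne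
        · rw [hPdef, Pi.single_eq_same]
          exact Submodule.subset_span (Set.mem_insert_of_mem γ rfl)
        · rw [hPdef, Pi.single_eq_of_ne hne]
          exact Submodule.zero_mem _
      have hval : (γ • C - P) j = (c2 j) • γ - P j := by
        simp only [Pi.sub_apply, Pi.smul_apply, smul_eq_mul, hCdef]
        simp only [Algebra.smul_def]
        ring
      rw [hval]
      exact sub_mem
        (Submodule.smul_mem _ _ (Submodule.subset_span (Set.mem_insert _ _))) hPj
    have hg2X : γ • C - P ∈ X := key_step X hmod hx'X hx'r hsum2 h1' h2'
    have h := X.sub_mem hγC hg2X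
    rwa [sub_sub_cancel] at h
  -- conclude
  rw [eq_top_iff]
  intro v _
  have hvrepr : v = ∑ i, v i • (Pi.single i 1 : Fin n → L) := by
    funext j
    simp [Finset.sum_apply, Pi.single_apply, mul_ite]
  rw [hvrepr]
  exact Submodule.sum_mem _ fun i _ => X.smul_mem _ (hPX i)
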